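/- Let V = F_p^n and let G ≤ Aff(V) be insoluble, satisfy Hypothesis (*), and be such that V is an irreducible F_p[G]-module for the linear action. Then G has no non-trivial soluble subnormal subgroup. -/

import Mathlib

/-- The vector space `𝔽_p^n`. -/
abbrev V (p n : ℕ) : Type := Fin n → ZMod p

/-- The affine group `Aff(V) = V ⋊ GL(V)` of `V = 𝔽_p^n`, realised as the group of
affine self-equivalences of `V`; the pair `(v, A)` corresponds to `w ↦ A w + v` and
acts on `V` by evaluation. -/
abbrev Aff (p n : ℕ) : Type := V p n ≃ᵃ[ZMod p] V p n

/-- The stabiliser of the point `v` in a subgroup `G ≤ Aff(V)`. -/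
def affStab {p n : ℕ} (G : Subgroup (Aff p n)) (v : V p n) : Subgroup (Aff p n) where
  carrier := {g | g ∈ G ∧ g v = v}
  one_mem' := ⟨G.one_mem, rfl⟩
  mul_mem' := by
    rintro a b ⟨haG, hav⟩ ⟨hbG, hbv⟩
    refine ⟨G.mul_mem haG hbG, ?_⟩
    show a (b v) = v
    rw [hbv, hav]
  inv_mem' := by
    rintro a ⟨haG, hav⟩
    refine ⟨G.inv_mem haG, ?_⟩
    have h1 : (a⁻¹ * a) v = a⁻¹ (a v) := rfl
    rw [inv_mul_cancel] at h1
    rw [hav] at h1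
    exact h1.symm

/-- Hypothesis (*): for each `v ∈ V`, the stabiliser of `v` in `G` is a soluble
subgroup of `p`-power index in `G`. -/
def HypStar (p n : ℕ) (G : Subgroup (Aff p n)) : Prop :=
  ∀ v : V p n, IsSolvable (affStab G v) ∧ ∃ s : ℕ, (affStab G v).relIndex G = p ^ s

/-- A subgroup `H` of a group `Γ` is subnormal if there is a chain
`H = H₀ ◁ H₁ ◁ ⋯ ◁ H_k = Γ`. -/
def IsSubnormalIn {Γ : Type*} [Group Γ] (H : Subgroup Γ) : Prop :=
  ∃ (k : ℕ) (c : Fin (k + 1) → Subgroup Γ),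
    c 0 = H ∧ c (Fin.last k) = ⊤ ∧
    ∀ i : Fin k, c i.castSucc ≤ c i.succ ∧ ((c i.castSucc).subgroupOf (c i.succ)).Normal



section GT
variable {Γ : Type*} [Group Γ]

lemma mySolvable_of_le {A B : Subgroup Γ} (h : A ≤ B) (hs : IsSolvable ↥B) : IsSolvable ↥A := by
  haveI : Group.IsSolvable ↥B := hs
  exact solvable_of_solvable_injective (Subgroup.inclusion_injective h)

lemma mySolvable_equiv {H : Type*} [Group H] (e : Γ ≃* H) (hs : IsSolvable H) : IsSolvable Γ := by
  haveI : Group.IsSolvable H := hs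
  exact solvable_of_solvable_injective (f := e.toMonoidHom) e.injective

lemma mySolvable_bot : IsSolvable ↥(⊥ : Subgroup Γ) :=
  isSolvable_of_comm fun a b => by
    have ha : (a : Γ) = 1 := Subgroup.mem_bot.mp a.2
    have hb : (b : Γ) = 1 := Subgroup.mem_bot.mp b.2
    ext; simp [ha, hb]

lemma myMem_sup_decomp {A B : Subgroup Γ} (hn : ∀ b ∈ B, ∀ a ∈ A, b * a * b⁻¹ ∈ A) :
    ∀ x ∈ A ⊔ B, ∃ a ∈ A, ∃ b ∈ B, x = a * b := by
  intro x hx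
  rw [Subgroup.sup_eq_closure] at hx
  induction hx using Subgroup.closure_induction with
  | mem x h =>
    rcases h with h | h
    · exact ⟨x, h, 1, B.one_mem, (mul_one x).symm⟩
    · exact ⟨1, A.one_mem, x, h, (one_mul x).symm⟩
  | one => exact ⟨1, A.one_mem, 1, B.one_mem, (one_mul 1).symm⟩
  | mul x y hx hy ihx ihy =>
    obtain ⟨a₁, ha₁, b₁, hb₁, rfl⟩ := ihx
    obtain ⟨a₂, ha₂, b₂, hb₂, rfl⟩ := ihy
    refine ⟨a₁ * (b₁ * a₂ * b₁⁻¹), A.mul_mem ha₁ (hn b₁ hb₁ a₂ ha₂), b₁ * b₂,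
      B.mul_mem hb₁ hb₂, ?_⟩
    group
  | inv x hx ih =>
    obtain ⟨a, ha, b, hb, rfl⟩ := ih
    refine ⟨b⁻¹ * a⁻¹ * b⁻¹⁻¹, hn b⁻¹ (B.inv_mem hb) a⁻¹ (A.inv_mem ha), b⁻¹, B.inv_mem hb, ?_⟩
    group

/-- solvability of a join of two solvable subgroups, the second normalizing the first -/
lemma mySolvable_sup {A B : Subgroup Γ} (hA : IsSolvable ↥A) (hB : IsSolvable ↥B)
    (hn : ∀ b ∈ B, ∀ a ∈ A, b * a * b⁻¹ ∈ A) : IsSolvable ↥(A ⊔ B) := by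
  have hAK : A ≤ A ⊔ B := le_sup_left
  have hBK : B ≤ A ⊔ B := le_sup_right
  have hnorm : A ⊔ B ≤ Subgroup.normalizer (A : Set Γ) := by
    refine sup_le Subgroup.le_normalizer ?_
    intro b hb
    rw [Subgroup.mem_normalizer_iff]
    intro h
    constructor
    · intro hh; exact hn b hb h hh
    · intro hh
      have := hn b⁻¹ (B.inv_mem hb) _ hh
      simpa [mul_assoc] using this
  haveI hNn : (A.subgroupOf (A ⊔ B)).Normal := by
    constructor
    intro x hx k
    have : (k : Γ) * x * (k : Γ)⁻¹ ∈ A := by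
      have hk := hnorm k.2
      rw [Subgroup.mem_normalizer_iff] at hk
      exact (hk (x : Γ)).mp hx
    simpa [Subgroup.mem_subgroupOf] using this
  haveI hNsolv : Group.IsSolvable ↥(A.subgroupOf (A ⊔ B)) :=
    mySolvable_equiv (Subgroup.subgroupOfEquivOfLe hAK) hA
  haveI hB'solv : Group.IsSolvable ↥(B.subgroupOf (A ⊔ B)) :=
    mySolvable_equiv (Subgroup.subgroupOfEquivOfLe hBK) hB
  haveI hQsolv : Group.IsSolvable (↥(A ⊔ B) ⧸ A.subgroupOf (A ⊔ B)) := by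
    have hsurj : Function.Surjective
        ((QuotientGroup.mk' (A.subgroupOf (A ⊔ B))).comp (B.subgroupOf (A ⊔ B)).subtype) := by
      intro q
      obtain ⟨x, hx⟩ := QuotientGroup.mk'_surjective (A.subgroupOf (A ⊔ B)) q
      obtain ⟨a, ha, b, hb, hab⟩ := myMem_sup_decomp hn (x : Γ) x.2
      refine ⟨⟨⟨b, hBK hb⟩, by simpa [Subgroup.mem_subgroupOf] using hb⟩, ?_⟩
      simp only [MonoidHom.comp_apply, Subgroup.coe_subtype]
      rw [← hx]
      have hxeq : x = (⟨a, hAK ha⟩ : ↥(A ⊔ B)) * ⟨b, hBK hb⟩ := Subtype.ext hab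
      rw [hxeq, map_mul]
      have : (QuotientGroup.mk' (A.subgroupOf (A ⊔ B))) ⟨a, hAK ha⟩ = 1 :=
        (QuotientGroup.eq_one_iff _).mpr (by simpa [Subgroup.mem_subgroupOf] using ha)
      rw [this, one_mul]
    exact solvable_of_surjective hsurj
  exact solvable_of_ker_le_range (A.subgroupOf (A ⊔ B)).subtype
    (QuotientGroup.mk' (A.subgroupOf (A ⊔ B)))
    (by rw [QuotientGroup.ker_mk', Subgroup.range_subtype])

end GT

section GT2
variable {Γ : Type*} [Group Γ]

/-- solvability of a finite join of solvable subgroups of `C`, each normalized by `C` -/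
lemma mySolvable_finsup {ι : Type*} (s : Finset ι) (f : ι → Subgroup Γ) (C : Subgroup Γ)
    (hle : ∀ i ∈ s, f i ≤ C)
    (hn : ∀ i ∈ s, ∀ b ∈ C, ∀ a ∈ f i, b * a * b⁻¹ ∈ f i)
    (hs : ∀ i ∈ s, IsSolvable ↥(f i)) :
    IsSolvable ↥(s.sup f) ∧ s.sup f ≤ C ∧
      (∀ b ∈ C, ∀ a ∈ s.sup f, b * a * b⁻¹ ∈ s.sup f) := by
  classical
  induction s using Finset.cons_induction with
  | empty =>
    refine ⟨by rw [Finset.sup_empty]; exact (mySolvable_bot (Γ := Γ)), by simp, ?_⟩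
    intro b hb a ha
    simp only [Finset.sup_empty] at ha ⊢
    rw [Subgroup.mem_bot] at ha ⊢
    simp [ha]
  | cons i s his ih =>
    have hle' : ∀ j ∈ s, f j ≤ C := fun j hj => hle j (Finset.mem_cons_of_mem hj)
    have hn' : ∀ j ∈ s, ∀ b ∈ C, ∀ a ∈ f j, b * a * b⁻¹ ∈ f j :=
      fun j hj => hn j (Finset.mem_cons_of_mem hj)
    have hs' : ∀ j ∈ s, IsSolvable ↥(f j) := fun j hj => hs j (Finset.mem_cons_of_mem hj)
    obtain ⟨ihsolv, ihle, ihconj⟩ := ih hle' hn' hs'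
    have hiC : f i ≤ C := hle i (Finset.mem_cons_self i s)
    have hsolv : IsSolvable ↥(f i ⊔ s.sup f) := by
      refine mySolvable_sup (hs i (Finset.mem_cons_self i s)) ihsolv ?_
      intro b hb a ha
      exact hn i (Finset.mem_cons_self i s) b (ihle hb) a ha
    rw [Finset.sup_cons]
    refine ⟨hsolv, sup_le hiC ihle, ?_⟩
    intro b hb a ha
    obtain ⟨x, hx, y, hy, rfl⟩ := myMem_sup_decomp
      (fun b' hb' a' ha' => hn i (Finset.mem_cons_self i s) b' (ihle hb') a' ha') a ha
    have h1 : b * x * b⁻¹ ∈ f i := hn i (Finset.mem_cons_self i s) b hb x hx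
    have h2 : b * y * b⁻¹ ∈ s.sup f := ihconj b hb y hy
    have : b * (x * y) * b⁻¹ = (b * x * b⁻¹) * (b * y * b⁻¹) := by group
    rw [this]
    exact Subgroup.mul_mem _ (Subgroup.mem_sup_left h1) (Subgroup.mem_sup_right h2)

/-- normal closure of `H` by conjugation with elements of `D` -/
def myNC (H D : Subgroup Γ) : Subgroup Γ :=
  ⨆ g : ↥D, H.map (MulAut.conj (g : Γ)).toMonoidHom

lemma myNC_le {H D C : Subgroup Γ} (hH : H ≤ C)
    (hinv : ∀ g ∈ D, ∀ a ∈ C, g * a * g⁻¹ ∈ C) : myNC H D ≤ C := by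
  refine iSup_le fun g => ?_
  rintro x ⟨a, ha, rfl⟩
  exact hinv g g.2 a (hH ha)

lemma myle_NC {H D : Subgroup Γ} : H ≤ myNC H D := by
  intro a ha
  have : a ∈ H.map (MulAut.conj ((1 : ↥D) : Γ)).toMonoidHom := by
    refine ⟨a, ha, ?_⟩
    simp
  exact Subgroup.mem_iSup_of_mem (1 : ↥D) this

lemma myNC_conj_mem {H D : Subgroup Γ} {b : Γ} (hb : b ∈ D) {a : Γ} (ha : a ∈ myNC H D) :
    b * a * b⁻¹ ∈ myNC H D := by
  refine Subgroup.iSup_induction _ (C := fun a => b * a * b⁻¹ ∈ myNC H D) ha ?_ (by simpa using Subgroup.one_mem (myNC H D)) ?_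
  · rintro g x ⟨y, hy, rfl⟩
    have : b * ((MulAut.conj (g : Γ)).toMonoidHom y) * b⁻¹
        = (MulAut.conj ((⟨b, hb⟩ * g : ↥D) : Γ)).toMonoidHom y := by
      simp [MulAut.conj_apply, mul_assoc]
    rw [this]
    exact Subgroup.mem_iSup_of_mem (⟨b, hb⟩ * g) ⟨y, hy, rfl⟩
  · intro x y hx hy
    have : b * (x * y) * b⁻¹ = (b * x * b⁻¹) * (b * y * b⁻¹) := by group
    rw [this]
    exact Subgroup.mul_mem _ hx hy

end GT2

section GT3
variable {Γ : Type*} [Group Γ]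

lemma myChain_mono {k : ℕ} (c : Fin (k+1) → Subgroup Γ)
    (h : ∀ i : Fin k, c i.castSucc ≤ c i.succ) : ∀ j, c 0 ≤ c j := by
  intro j
  induction j using Fin.induction with
  | zero => exact le_rfl
  | succ i ih => exact le_trans ih (h i)

lemma myNC_solvable [Finite Γ] :
    ∀ (k : ℕ) (c : Fin (k+1) → Subgroup Γ),
      (∀ i : Fin k, c i.castSucc ≤ c i.succ ∧
        ∀ b ∈ c i.succ, ∀ a ∈ c i.castSucc, b * a * b⁻¹ ∈ c i.castSucc) →
      IsSolvable ↥(c 0) → IsSolvable ↥(myNC (c 0) (c (Fin.last k))) := by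
  intro k
  induction k with
  | zero =>
    intro c _ hsolv
    have h0 : (Fin.last 0) = (0 : Fin 1) := rfl
    rw [h0]
    have : myNC (c 0) (c 0) = c 0 := by
      refine le_antisymm (myNC_le le_rfl ?_) myle_NC
      intro g hg a ha
      exact Subgroup.mul_mem _ (Subgroup.mul_mem _ hg ha) (Subgroup.inv_mem _ hg)
    rw [this]; exact hsolv
  | succ k ih =>
    intro c hchain hsolv
    classical
    haveI : Fintype ↥(c (Fin.last (k+1))) := Fintype.ofFinite _
    set D := c (Fin.last (k+1)) with hD
    set E := c ((Fin.last k).castSucc) with hE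
    have hlast := hchain (Fin.last k)
    rw [Fin.succ_last] at hlast
    obtain ⟨hED, hDnormE⟩ := hlast
    have hmono : ∀ j, c 0 ≤ c j := myChain_mono c (fun i => (hchain i).1)
    -- conjugation homs
    have hconj_inj : ∀ g : Γ, Function.Injective ⇑(MulAut.conj g).toMonoidHom :=
      fun g => (MulAut.conj g).injective
    have hEg : ∀ g : ↥D, E.map (MulAut.conj (g : Γ)).toMonoidHom = E := by
      intro g
      refine le_antisymm ?_ ?_
      · rintro x ⟨a, ha, rfl⟩
        exact hDnormE g g.2 a ha
      · intro a ha
        refine ⟨(g : Γ)⁻¹ * a * (g : Γ), ?_, ?_⟩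
        · have := hDnormE (g : Γ)⁻¹ (D.inv_mem g.2) a ha
          simpa [mul_assoc] using this
        · simp [MulAut.conj_apply]; group
    have key : ∀ g : ↥D,
        IsSolvable ↥(myNC ((c 0).map (MulAut.conj (g : Γ)).toMonoidHom) E) := by
      intro g
      set φ := (MulAut.conj (g : Γ)).toMonoidHom with hφ
      set cg : Fin (k+1) → Subgroup Γ := fun i => (c i.castSucc).map φ with hcg
      have hchain' : ∀ i : Fin k, cg i.castSucc ≤ cg i.succ ∧
          ∀ b ∈ cg i.succ, ∀ a ∈ cg i.castSucc, b * a * b⁻¹ ∈ cg i.castSucc := by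
        intro i
        have horig := hchain i.castSucc
        constructor
        · have : (i.castSucc).succ = (i.succ).castSucc := Fin.succ_castSucc i
          rw [hcg]
          dsimp only
          rw [← this]
          exact Subgroup.map_mono horig.1
        · rintro b hb a ha
          rw [hcg] at hb ha ⊢
          dsimp only at hb ha ⊢
          rw [← Fin.succ_castSucc] at hb
          obtain ⟨b₀, hb₀, rfl⟩ := hb
          obtain ⟨a₀, ha₀, rfl⟩ := ha
          refine ⟨b₀ * a₀ * b₀⁻¹, horig.2 b₀ hb₀ a₀ ha₀, ?_⟩
          simp [hφ, MulAut.conj_apply]; group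
      have hsolv' : IsSolvable ↥(cg 0) := by
        have h00 : cg 0 = (c 0).map φ := by
          rw [hcg]; dsimp only; norm_num
        rw [h00]
        exact mySolvable_equiv (Subgroup.equivMapOfInjective (c 0) φ (hconj_inj _)).symm hsolv
      have := ih cg hchain' hsolv'
      have hcgl : cg (Fin.last k) = E.map φ := rfl
      have hcg0 : cg 0 = (c 0).map φ := by rw [hcg]; dsimp only; norm_num
      rw [hcg0, hcgl, hEg g] at this
      exact this
    -- total sup
    set T := Finset.univ.sup
      (fun g : ↥D => myNC ((c 0).map (MulAut.conj (g : Γ)).toMonoidHom) E) with hT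
    have hc0E : c 0 ≤ E := hmono _
    obtain ⟨hTsolv, hTle, _⟩ := mySolvable_finsup Finset.univ
      (fun g : ↥D => myNC ((c 0).map (MulAut.conj (g : Γ)).toMonoidHom) E) E
      (fun g _ => by
        refine myNC_le ?_ ?_
        · rintro x ⟨a, ha, rfl⟩
          rw [← hEg g]
          exact ⟨a, hc0E ha, rfl⟩
        · intro e he a ha
          exact E.mul_mem (E.mul_mem he ha) (E.inv_mem he))
      (fun g _ => fun b hb a ha => myNC_conj_mem hb ha)
      (fun g _ => key g)
    have hle : myNC (c 0) D ≤ T := by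
      refine iSup_le fun g => ?_
      refine le_trans (myle_NC (H := (c 0).map (MulAut.conj ((g : Γ))).toMonoidHom)
        (D := E)) ?_
      exact Finset.le_sup (f := fun g : ↥D =>
        myNC ((c 0).map (MulAut.conj ((g : Γ))).toMonoidHom) E) (Finset.mem_univ g)
    exact mySolvable_of_le hle hTsolv

end GT3




lemma myAffFinite (p n : ℕ) [NeZero p] : Finite (Aff p n) :=
  Finite.of_injective (fun f => (⇑f : V p n → V p n)) (DFunLike.coe_injective)

lemma myLinear_mul {p n : ℕ} (a b : Aff p n) (w : V p n) :
    (a * b).linear w = a.linear (b.linear w) := by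
  have h := map_mul (AffineEquiv.linearHom (k := ZMod p) (P₁ := V p n)) a b
  rw [show (a * b).linear = AffineEquiv.linearHom (a * b) from rfl, h]; rfl

lemma myApp_add {p n : ℕ} (a : Aff p n) (v w : V p n) : a (v + w) = a.linear v + a w := by
  have := AffineEquiv.map_vadd a w v
  simpa using this

/-- the stabiliser of `v` inside `↥G` -/
def mySt {p n : ℕ} (G : Subgroup (Aff p n)) (v : V p n) : Subgroup ↥G where
  carrier := {x | (x : Aff p n) v = v}
  one_mem' := rfl
  mul_mem' := by
    intro a b ha hb
    show ((a : Aff p n) * (b : Aff p n)) v = v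
    show (a : Aff p n) ((b : Aff p n) v) = v
    rw [show (b : Aff p n) v = v from hb, show (a : Aff p n) v = v from ha]
  inv_mem' := by
    intro a ha
    show ((a : Aff p n))⁻¹ v = v
    have h1 : ((a : Aff p n))⁻¹ ((a : Aff p n) v) = v := by
      show (((a : Aff p n))⁻¹ * (a : Aff p n)) v = v
      rw [inv_mul_cancel]; rfl
    rw [show (a : Aff p n) v = v from ha] at h1
    exact h1

lemma mySt_mem {p n : ℕ} (G : Subgroup (Aff p n)) (v : V p n) (x : ↥G) :
    x ∈ mySt G v ↔ (x : Aff p n) v = v := Iff.rfl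

lemma mySt_index {p n : ℕ} (G : Subgroup (Aff p n)) (v : V p n) :
    (mySt G v).index = (affStab G v).relIndex G := by
  have h : mySt G v = (affStab G v).subgroupOf G := by
    ext x
    rw [mySt_mem, Subgroup.mem_subgroupOf]
    constructor
    · intro hx; exact ⟨x.2, hx⟩
    · intro hx; exact hx.2
  rw [h]; rfl

open scoped commutatorElement in
lemma myAbelianNormal {Γ : Type*} [Group Γ] (N : Subgroup Γ) (hN : N.Normal)
    (hs : IsSolvable ↥N) (hbot : N ≠ ⊥) :
    ∃ A : Subgroup Γ, A ≠ ⊥ ∧ (∀ a ∈ A, ∀ b ∈ A, a * b = b * a) ∧ A.Normal := by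
  classical
  obtain ⟨m0, hm0⟩ := hs.solvable
  set D : ℕ → Subgroup Γ := fun i => (derivedSeries ↥N i).map N.subtype with hD
  have hD0 : D 0 = N := by
    rw [hD]; dsimp only
    rw [derivedSeries_zero, ← MonoidHom.range_eq_map, Subgroup.range_subtype]
  have hDsucc : ∀ i, D (i + 1) = ⁅D i, D i⁆ := by
    intro i
    rw [hD]; dsimp only
    rw [derivedSeries_succ, Subgroup.map_commutator]
  have hconj : ∀ i, ∀ x : Γ, ∀ a ∈ D i, x * a * x⁻¹ ∈ D i := by
    intro i
    induction i with
    | zero => intro x a ha; rw [hD0] at *; exact hN.conj_mem a ha x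
    | succ i ih =>
      intro x a ha
      have hmap : (D (i+1)).map (MulAut.conj x).toMonoidHom ≤ D (i + 1) := by
        rw [hDsucc i, Subgroup.map_commutator]
        refine Subgroup.commutator_mono ?_ ?_ <;>
        · rintro y ⟨z, hz, rfl⟩
          exact ih x z hz
      exact hmap ⟨a, ha, rfl⟩
  have hex : ∃ j, D j = ⊥ := ⟨m0, by rw [hD]; dsimp only; rw [hm0, Subgroup.map_bot]⟩
  set m := Nat.find hex with hm
  have hmbot : D m = ⊥ := Nat.find_spec hex
  have hmne : m ≠ 0 := by
    intro h
    rw [h, hD0] at hmbot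
    exact hbot hmbot
  have hmpred : m - 1 + 1 = m := Nat.succ_pred_eq_of_pos (Nat.pos_of_ne_zero hmne)
  refine ⟨D (m - 1), Nat.find_min hex (by omega), ?_, ?_⟩
  · intro a ha b hb
    have : ⁅a, b⁆ ∈ ⁅D (m-1), D (m-1)⁆ := Subgroup.commutator_mem_commutator ha hb
    rw [← hDsucc, hmpred, hmbot, Subgroup.mem_bot] at this
    have := commutatorElement_eq_one_iff_mul_comm.mp this
    exact this
  · exact ⟨fun a ha x => hconj (m-1) x a ha⟩

def myTor {Γ : Type*} [Group Γ] (A : Subgroup Γ) (p : ℕ)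
    (hAcomm : ∀ a ∈ A, ∀ b ∈ A, a * b = b * a) : Subgroup Γ where
  carrier := {g | g ∈ A ∧ g ^ p = 1}
  one_mem' := ⟨A.one_mem, one_pow p⟩
  mul_mem' := by
    rintro a b ⟨haA, hap⟩ ⟨hbA, hbp⟩
    refine ⟨A.mul_mem haA hbA, ?_⟩
    rw [Commute.mul_pow (hAcomm a haA b hbA), hap, hbp, mul_one]
  inv_mem' := by
    rintro a ⟨haA, hap⟩
    exact ⟨A.inv_mem haA, by rw [inv_pow, hap, inv_one]⟩

lemma myTor_mem {Γ : Type*} [Group Γ] (A : Subgroup Γ) (p : ℕ)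
    (hAcomm : ∀ a ∈ A, ∀ b ∈ A, a * b = b * a) (x : Γ) :
    x ∈ myTor A p hAcomm ↔ x ∈ A ∧ x ^ p = 1 := Iff.rfl

lemma myU_ne_bot {p n : ℕ} (hp : p.Prime) (hn0 : 0 < n) {G : Subgroup (Aff p n)}
    (B : Subgroup ↥G) (hBp : ∀ x ∈ B, x ^ p = 1) :
    ∃ w : V p n, w ≠ 0 ∧ ∀ x ∈ B, ((x : Aff p n)).linear w = w := by
  haveI : Fact p.Prime := ⟨hp⟩
  haveI : NeZero p := ⟨hp.ne_zero⟩
  letI : MulAction ↥B {w : V p n // w ≠ 0} :=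
    { smul := fun x w => ⟨(((x : ↥G) : Aff p n)).linear w, by
        intro h
        exact w.2 (by
          have := (((x : ↥G) : Aff p n)).linear.injective
            (a₁ := (w : V p n)) (a₂ := 0) (by simpa using h)
          exact this)⟩
      one_smul := fun w => Subtype.ext rfl
      mul_smul := fun x y w => Subtype.ext (by
        show (((x * y : ↥B) : Aff p n)).linear w = _
        exact myLinear_mul ((x : ↥G) : Aff p n) ((y : ↥G) : Aff p n) w) }
  have hpg : IsPGroup p ↥B := by
    intro b
    refine ⟨1, ?_⟩
    rw [pow_one]
    exact Subtype.ext (by simpa using hBp (b : ↥G) b.2)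
  have hcard : ¬ p ∣ Nat.card {w : V p n // w ≠ 0} := by
    have h1 : Nat.card {w : V p n // w ≠ 0} = p ^ n - 1 := by
      rw [Nat.card_eq_fintype_card]
      have := Fintype.card_subtype_compl (fun w : V p n => w = 0)
      rw [this, Fintype.card_subtype_eq (0 : V p n)]
      congr 1
      rw [show (Fintype.card (V p n)) = Fintype.card (ZMod p) ^ Fintype.card (Fin n) from
        Fintype.card_fun, ZMod.card, Fintype.card_fin]
    rw [h1]
    intro hdvd
    have h2 : p ∣ p ^ n := dvd_pow_self p hn0.ne'
    have h3 : p ^ n - (p ^ n - 1) = 1 := by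
      have : 1 ≤ p ^ n := Nat.one_le_pow n p hp.pos
      omega
    have := Nat.dvd_sub h2 hdvd
    rw [h3] at this
    have h4 := hp.one_lt
    have h5 := Nat.dvd_one.mp this
    omega
  obtain ⟨w₀, hw₀⟩ := hpg.nonempty_fixed_point_of_prime_not_dvd_card _ hcard
  rw [MulAction.mem_fixedPoints] at hw₀
  refine ⟨(w₀ : V p n), w₀.2, ?_⟩
  intro x hx
  exact congrArg Subtype.val (hw₀ (⟨x, hx⟩ : ↥B))

lemma myAffineNormal (p n : ℕ) (hp : p.Prime) (hn0 : 0 < n) (G : Subgroup (Aff p n))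
    (hG : HypStar p n G) (hinsol : ¬ IsSolvable G)
    (hirr : ∀ W : Submodule (ZMod p) (V p n),
      (∀ g ∈ G, ∀ w ∈ W, g.linear w ∈ W) → W = ⊥ ∨ W = ⊤) :
    ∀ N : Subgroup ↥G, N.Normal → IsSolvable ↥N → N = ⊥ := by
  haveI : Fact p.Prime := ⟨hp⟩
  haveI : NeZero p := ⟨hp.ne_zero⟩
  haveI : Finite (Aff p n) := myAffFinite p n
  intro N hNnorm hNsolv
  by_contra hNbot
  obtain ⟨A, hAbot, hAcomm, hAnorm⟩ := myAbelianNormal N hNnorm hNsolv hNbot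
  -- A contains a nontrivial element
  obtain ⟨a₁, ha₁A, ha₁ne⟩ : ∃ a ∈ A, a ≠ 1 := by
    by_contra h
    push_neg at h
    exact hAbot ((Subgroup.eq_bot_iff_forall A).mpr h)
  by_cases hpdvd : p ∣ Nat.card ↥A
  · -- the p-torsion subgroup B of A
    set B := myTor A p hAcomm with hB
    have hBA : B ≤ A := fun x hx => hx.1
    have hBp : ∀ x ∈ B, x ^ p = 1 := fun x hx => hx.2
    haveI hBnorm : B.Normal := by
      constructor
      rintro x ⟨hxA, hxp⟩ g
      refine ⟨hAnorm.conj_mem x hxA g, ?_⟩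
      rw [conj_pow, hxp, mul_one, mul_inv_cancel]
    have hBne : ∃ x ∈ B, x ≠ 1 := by
      haveI : Fintype ↥A := Fintype.ofFinite _
      obtain ⟨a₀, ha₀⟩ := exists_prime_orderOf_dvd_card (G := ↥A) p
        (by rw [← Nat.card_eq_fintype_card]; exact hpdvd)
      refine ⟨(a₀ : ↥G), ⟨a₀.2, ?_⟩, ?_⟩
      · have := pow_orderOf_eq_one a₀
        rw [ha₀] at this
        exact (by simpa using congrArg Subtype.val this)
      · intro h
        have : a₀ = 1 := Subtype.ext h
        rw [this, orderOf_one] at ha₀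
        exact hp.one_lt.ne' ha₀.symm
    -- the fixed space U of the linear parts of B
    set U : Submodule (ZMod p) (V p n) :=
      { carrier := {w | ∀ x : ↥G, x ∈ B → ((x : Aff p n)).linear w = w}
        zero_mem' := fun x _ => map_zero _
        add_mem' := by
          intro a b ha hb x hx
          rw [map_add, ha x hx, hb x hx]
        smul_mem' := by
          intro c w hw x hx
          rw [map_smul, hw x hx] } with hU
    have hUmem : ∀ w : V p n, w ∈ U ↔ ∀ x : ↥G, x ∈ B → ((x : Aff p n)).linear w = w :=
      fun w => Iff.rfl
    have hUne : U ≠ ⊥ := by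
      obtain ⟨w, hwne, hwfix⟩ := myU_ne_bot hp hn0 B hBp
      intro h
      have : w ∈ U := fun x hx => hwfix x hx
      rw [h, Submodule.mem_bot] at this
      exact hwne this
    have hUinv : ∀ g ∈ G, ∀ w ∈ U, g.linear w ∈ U := by
      intro g hg w hw x hx
      set ξ : ↥G := ⟨g, hg⟩ with hξ
      have hy : ξ⁻¹ * x * ξ ∈ B := by
        have := hBnorm.conj_mem x hx ξ⁻¹
        simpa [mul_assoc] using this
      have hxeq : (x : Aff p n) = (ξ : Aff p n) * ((ξ⁻¹ * x * ξ : ↥G) : Aff p n) * ((ξ : Aff p n))⁻¹ := by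
        push_cast
        group
      rw [hxeq]
      have e1 : ∀ (a b : Aff p n) (u : V p n), (a * b).linear u = a.linear (b.linear u) :=
        fun a b u => myLinear_mul a b u
      rw [e1, e1]
      have hback : ((ξ : Aff p n))⁻¹.linear (g.linear w) = w := by
        have := e1 ((ξ : Aff p n))⁻¹ (ξ : Aff p n) w
        rw [inv_mul_cancel] at this
        exact this.symm
      rw [hback, hw _ hy]
    rcases hirr U hUinv with hUbot | hUtop
    · exact hUne hUbot
    · -- all elements of B are translations
      have htrans : ∀ x : ↥G, x ∈ B → ∀ w : V p n, (x : Aff p n) w = w + (x : Aff p n) 0 := by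
        intro x hx w
        have hlin : ((x : Aff p n)).linear w = w := by
          have : w ∈ U := by rw [hUtop]; exact Submodule.mem_top
          exact this x hx
        have := myApp_add (x : Aff p n) w 0
        rw [hlin] at this
        simpa [add_comm] using this
      have hpow : ∀ (x : ↥G), x ∈ B → ∀ m : ℕ,
          ((x ^ m : ↥G) : Aff p n) 0 = m • ((x : Aff p n) 0) := by
        intro x hx m
        induction m with
        | zero => simp
        | succ m ih =>
          have h2 := htrans (x ^ m) (B.pow_mem hx m) ((x : Aff p n) 0)
          rw [pow_succ]
          have h1 : ((x ^ m * x : ↥G) : Aff p n) 0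
              = ((x ^ m : ↥G) : Aff p n) ((x : Aff p n) 0) := rfl
          rw [h1, h2, ih, succ_nsmul, add_comm]
      set W : Submodule (ZMod p) (V p n) :=
        { carrier := {v | ∃ x : ↥G, x ∈ B ∧ (x : Aff p n) 0 = v}
          zero_mem' := ⟨1, B.one_mem, rfl⟩
          add_mem' := by
            rintro v w ⟨x, hx, rfl⟩ ⟨y, hy, rfl⟩
            refine ⟨x * y, B.mul_mem hx hy, ?_⟩
            have h1 : ((x * y : ↥G) : Aff p n) 0 = (x : Aff p n) ((y : Aff p n) 0) := rfl
            rw [h1, htrans x hx]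
            exact add_comm _ _
          smul_mem' := by
            rintro c v ⟨x, hx, rfl⟩
            refine ⟨x ^ c.val, B.pow_mem hx c.val, ?_⟩
            rw [hpow x hx c.val]
            have hcv : ((c.val : ℕ) : ZMod p) = c := by
              rw [ZMod.natCast_val, ZMod.cast_id]
            have hgoal := (Nat.cast_smul_eq_nsmul (ZMod p) c.val ((x : Aff p n) 0)).symm
            rw [hcv] at hgoal
            exact hgoal } with hWdef
      obtain ⟨x₁, hx₁B, hx₁ne⟩ := hBne
      have hWne : W ≠ ⊥ := by
        intro h
        have hv : (x₁ : Aff p n) 0 ∈ W := ⟨x₁, hx₁B, rfl⟩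
        rw [h, Submodule.mem_bot] at hv
        apply hx₁ne
        apply Subtype.ext
        apply DFunLike.ext
        intro w
        rw [htrans x₁ hx₁B w, hv, add_zero]
        rfl
      have hWinv : ∀ g ∈ G, ∀ v ∈ W, g.linear v ∈ W := by
        rintro g hg v ⟨x, hx, rfl⟩
        set ξ : ↥G := ⟨g, hg⟩ with hξ
        refine ⟨ξ * x * ξ⁻¹, hBnorm.conj_mem x hx ξ, ?_⟩
        have h1 : ((ξ * x * ξ⁻¹ : ↥G) : Aff p n) 0
            = g ((x : Aff p n) (((ξ⁻¹ : ↥G) : Aff p n) 0)) := rfl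
        rw [h1, htrans x hx, add_comm,
          myApp_add g ((x : Aff p n) 0) (((ξ⁻¹ : ↥G) : Aff p n) 0)]
        have h2 : g (((ξ⁻¹ : ↥G) : Aff p n) 0) = 0 := by
          have h3 : g (((ξ⁻¹ : ↥G) : Aff p n) 0)
              = ((g : Aff p n) * ((ξ⁻¹ : ↥G) : Aff p n)) 0 := rfl
          rw [h3]
          have h4 : (g : Aff p n) * ((ξ⁻¹ : ↥G) : Aff p n) = 1 := by
            have h5 : ((ξ⁻¹ : ↥G) : Aff p n) = g⁻¹ := rfl
            rw [h5, mul_inv_cancel]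
          rw [h4]
          rfl
        rw [h2, add_zero]
      rcases hirr W hWinv with hWbot | hWtop
      · exact hWne hWbot
      · apply hinsol
        haveI hBsolv : Group.IsSolvable ↥B :=
          isSolvable_of_comm fun a b =>
            Subtype.ext (hAcomm _ (hBA a.2) _ (hBA b.2))
        haveI hStsolv : Group.IsSolvable ↥(mySt G 0) := by
          haveI : Group.IsSolvable ↥(affStab G 0) := (hG 0).1
          have hinj : Function.Injective (fun x : ↥(mySt G 0) =>
              (⟨((x : ↥G) : Aff p n), ⟨((x : ↥G)).2, x.2⟩⟩ : ↥(affStab G 0))) := by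
            intro a b h
            have h' : ((a : ↥G) : Aff p n) = ((b : ↥G) : Aff p n) := by
              have h2 := congrArg (Subtype.val (α := Aff p n)) h
              simpa using h2
            exact Subtype.ext (Subtype.ext h')
          exact solvable_of_solvable_injective
            (f := { toFun := fun x : ↥(mySt G 0) =>
                      (⟨((x : ↥G) : Aff p n), ⟨((x : ↥G)).2, x.2⟩⟩ : ↥(affStab G 0)),
                    map_one' := rfl, map_mul' := fun a b => rfl }) hinj
        haveI hQsolv : Group.IsSolvable (↥G ⧸ B) := by
          have hsurj : Function.Surjective ((QuotientGroup.mk' B).comp (mySt G 0).subtype) := by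
            intro q
            obtain ⟨x, hx⟩ := QuotientGroup.mk'_surjective B q
            have hv : (x : Aff p n) 0 ∈ W := by rw [hWtop]; exact Submodule.mem_top
            obtain ⟨b, hbB, hb0⟩ := hv
            have hmem : b⁻¹ * x ∈ mySt G 0 := by
              rw [mySt_mem]
              have h1 : ((b⁻¹ * x : ↥G) : Aff p n) 0 = ((b : Aff p n))⁻¹ ((x : Aff p n) 0) := rfl
              rw [h1, ← hb0]
              have h2 : ((b : Aff p n))⁻¹ ((b : Aff p n) 0)
                  = (((b : Aff p n))⁻¹ * (b : Aff p n)) 0 := rfl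
              rw [h2, inv_mul_cancel]
              rfl
            refine ⟨⟨b⁻¹ * x, hmem⟩, ?_⟩
            simp only [MonoidHom.comp_apply, Subgroup.coe_subtype]
            rw [map_mul, map_inv]
            have hb1 : (QuotientGroup.mk' B) b = 1 := (QuotientGroup.eq_one_iff b).mpr hbB
            rw [hb1, inv_one, one_mul, hx]
          exact solvable_of_surjective hsurj
        exact solvable_of_ker_le_range B.subtype (QuotientGroup.mk' B)
          (by rw [QuotientGroup.ker_mk', Subgroup.range_subtype])
  · -- p does not divide |A| : A fixes every point
    have hfix : ∀ v : V p n, A ≤ mySt G v := by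
      intro v
      obtain ⟨s, hs⟩ := (hG v).2
      have hSindex : (mySt G v).index = p ^ s := by rw [mySt_index, hs]
      have e3 : (A ⊓ mySt G v).relIndex A = (mySt G v).relIndex A := by
        rw [inf_comm, Subgroup.inf_relIndex_right]
      have e1 : A.relIndex (mySt G v) * (mySt G v).index = (A ⊓ mySt G v).index := by
        have := Subgroup.relIndex_inf_mul_relIndex A (mySt G v) ⊤
        simpa [Subgroup.relIndex_top_right] using this
      have e2 : (A ⊓ mySt G v).relIndex A * A.index = (A ⊓ mySt G v).index :=
        Subgroup.relIndex_mul_index inf_le_left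
      haveI := hAnorm
      obtain ⟨t, ht⟩ := Subgroup.relIndex_dvd_index_of_normal A (mySt G v)
      have hrne : A.relIndex (mySt G v) ≠ 0 := Subgroup.index_ne_zero_of_finite
      have heq : (mySt G v).relIndex A * t = p ^ s := by
        have h := e2.trans e1.symm
        rw [e3, ht, hSindex] at h
        -- h : (mySt G v).relIndex A * (A.relIndex (mySt G v) * t) = A.relIndex (mySt G v) * p ^ s
        apply Nat.eq_of_mul_eq_mul_left (Nat.pos_of_ne_zero hrne)
        calc A.relIndex (mySt G v) * ((mySt G v).relIndex A * t)
            = (mySt G v).relIndex A * (A.relIndex (mySt G v) * t) := by ring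
          _ = A.relIndex (mySt G v) * p ^ s := h
      have hdvd1 : (mySt G v).relIndex A ∣ p ^ s := Dvd.intro t heq
      have hdvd2 : (mySt G v).relIndex A ∣ Nat.card ↥A := Subgroup.index_dvd_card _
      have hcop : Nat.Coprime (p ^ s) (Nat.card ↥A) :=
        Nat.Coprime.pow_left s ((Nat.Prime.coprime_iff_not_dvd hp).mpr hpdvd)
      have hone : (mySt G v).relIndex A = 1 :=
        Nat.dvd_one.mp (hcop ▸ Nat.dvd_gcd hdvd1 hdvd2)
      exact Subgroup.relIndex_eq_one.mp hone
    refine hAbot ((Subgroup.eq_bot_iff_forall A).mpr ?_)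
    intro a ha
    refine Subtype.ext (DFunLike.ext _ _ fun v => ?_)
    exact hfix v ha

lemma myCore {Γ : Type*} [Group Γ] [Finite Γ]
    (hnorm : ∀ N : Subgroup Γ, N.Normal → IsSolvable ↥N → N = ⊥)
    (H : Subgroup Γ) (hsub : IsSubnormalIn H) (hsolv : IsSolvable ↥H) : H = ⊥ := by
  obtain ⟨k, c, hc0, hctop, hc⟩ := hsub
  have hchain : ∀ i : Fin k, c i.castSucc ≤ c i.succ ∧
      ∀ b ∈ c i.succ, ∀ a ∈ c i.castSucc, b * a * b⁻¹ ∈ c i.castSucc := by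
    intro i
    obtain ⟨hle, hnormal⟩ := hc i
    refine ⟨hle, fun b hb a ha => ?_⟩
    have ha' : (⟨a, hle ha⟩ : ↥(c i.succ)) ∈ (c i.castSucc).subgroupOf (c i.succ) := by
      simpa [Subgroup.mem_subgroupOf] using ha
    have := hnormal.conj_mem _ ha' ⟨b, hb⟩
    simpa [Subgroup.mem_subgroupOf] using this
  have hsolv0 : IsSolvable ↥(c 0) := by rw [hc0]; exact hsolv
  have hM : IsSolvable ↥(myNC (c 0) (c (Fin.last k))) := myNC_solvable k c hchain hsolv0
  rw [hc0, hctop] at hM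
  have hMnormal : (myNC H (⊤ : Subgroup Γ)).Normal := by
    constructor
    intro a ha g
    exact myNC_conj_mem (Subgroup.mem_top g) ha
  have hMbot := hnorm _ hMnormal hM
  have : H ≤ myNC H (⊤ : Subgroup Γ) := myle_NC
  rw [hMbot] at this
  exact le_bot_iff.mp this

/-- Corollary 6.5: let `G ≤ Aff(V)` be insoluble, satisfy Hypothesis (*), and be such
that `V` is an irreducible `𝔽_p[G]`-module for the linear action.  Then `G` has no
non-trivial soluble subnormal subgroup. -/
theorem stmt_16 (p n : ℕ) (hp : p.Prime) (G : Subgroup (Aff p n))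
    (hG : HypStar p n G) (hinsol : ¬ IsSolvable G)
    (hirr : ∀ W : Submodule (ZMod p) (V p n),
      (∀ g ∈ G, ∀ w ∈ W, g.linear w ∈ W) → W = ⊥ ∨ W = ⊤) :
    ∀ H : Subgroup G, IsSubnormalIn H → IsSolvable H → H = ⊥ := by
  intro H hsub hsolv
  haveI : NeZero p := ⟨hp.ne_zero⟩
  haveI : Finite (Aff p n) := myAffFinite p n
  rcases Nat.eq_zero_or_pos n with hn | hn
  · exfalso
    apply hinsol
    subst hn
    haveI : Subsingleton (Aff p 0) :=
      ⟨fun a b => DFunLike.ext _ _ fun x => Subsingleton.elim _ _⟩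
    exact isSolvable_of_comm fun a b => Subtype.ext (Subsingleton.elim _ _)
  · exact myCore (myAffineNormal p n hp hn G hG hinsol hirr) H hsub hsolv
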